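/- Let λ = (λ₁ ≥ λ₂ ≥ ⋯ ≥ λ_r ≥ 0) be a partition with r parts (zeros allowed). Then in ℋ(A₁), the left-to-right product ψ_{λ_r} * ψ_{λ_{r−1}+1} * ψ_{λ_{r−2}+2} * ⋯ * ψ_{λ₁+r−1} equals the Schur polynomial s_λ(x₁,…,x_r) ∈ ℋ_r(A₁), where s_λ is characterized by s_λ(x₁,…,x_r) · ∏_{1≤i<j≤r} (x_i − x_j) = det( x_i^{λ_j + r − j} )_{1≤i,j≤r}. -/

import Mathlib

open MvPolynomial
open scoped Classical

/-- A finite quiver with vertex set `Fin n`: a finite type of arrows together with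
head and tail maps. -/
structure FinQuiver (n : ℕ) where
  Arr : Type
  [fintypeArr : Fintype Arr]
  hd : Arr → Fin n
  tl : Arr → Fin n

attribute [instance] FinQuiver.fintypeArr

variable {n : ℕ}

/-- `Q` is acyclic: there is no oriented cycle, i.e. no path
`a₁, …, a_{k+1}` (with `hd aₘ = tl aₘ₊₁`) whose final head equals its initial tail. -/
def FinQuiver.Acyclic (Q : FinQuiver n) : Prop :=
  ∀ (k : ℕ) (c : Fin (k + 1) → Q.Arr),
    (∀ m : Fin k, Q.hd (c m.castSucc) = Q.tl (c m.succ)) →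
    Q.hd (c (Fin.last k)) ≠ Q.tl (c 0)

/-- The Euler form `χ_Q` of the quiver `Q`. -/
def FinQuiver.euler (Q : FinQuiver n) (α β : Fin n → ℕ) : ℤ :=
  ∑ i : Fin n, (α i : ℤ) * β i - ∑ a : Q.Arr, (α (Q.tl a) : ℤ) * β (Q.hd a)

/-- The opposite antisymmetrization `⟨α,β⟩ = χ_Q(β,α) − χ_Q(α,β)`. -/
def FinQuiver.lam (Q : FinQuiver n) (α β : Fin n → ℕ) : ℤ :=
  Q.euler β α - Q.euler α β

/-- The polynomial ring in the variables `ω_{i,j}`, `i ∈ Q₀`, `j ∈ ℕ` (0-indexed). -/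
abbrev PolyQ (n : ℕ) := MvPolynomial (Fin n × ℕ) ℚ

/-- The permutation of the variables at vertex `i` induced by a permutation of `ℕ`. -/
def vertexPerm (i : Fin n) (σ : Equiv.Perm ℕ) : Fin n × ℕ → Fin n × ℕ :=
  fun p => if p.1 = i then (i, σ p.2) else p

/-- `f` is, for each vertex `i`, symmetric in the variables `ω_{i,0},…,ω_{i,γ i − 1}`. -/
def SymmIn (γ : Fin n → ℕ) (f : PolyQ n) : Prop :=
  ∀ (i : Fin n) (σ : Equiv.Perm ℕ),
    (∀ j : ℕ, σ j ≠ j → j < γ i) → rename (vertexPerm i σ) f = f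

lemma vars_smul_subset (c : ℚ) (f : PolyQ n) : (c • f).vars ⊆ f.vars := by
  rw [MvPolynomial.smul_eq_C_mul]
  refine (MvPolynomial.vars_mul _ _).trans ?_
  simp [MvPolynomial.vars_C]

/-- `ℋ_γ`: polynomials using only the variables `ω_{i,j}`, `j < γ i`, which are
symmetric at each vertex.  A `ℚ`-submodule of `PolyQ n`. -/
noncomputable def Hspace (γ : Fin n → ℕ) : Submodule ℚ (PolyQ n) where
  carrier := {f | (∀ p ∈ f.vars, p.2 < γ p.1) ∧ SymmIn γ f}
  add_mem' := by
    rintro f g ⟨hf1, hf2⟩ ⟨hg1, hg2⟩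
    refine ⟨fun p hp => ?_, fun i σ hσ => ?_⟩
    · rcases Finset.mem_union.mp (MvPolynomial.vars_add_subset f g hp) with h | h
      exacts [hf1 p h, hg1 p h]
    · rw [map_add, hf2 i σ hσ, hg2 i σ hσ]
  zero_mem' := by
    refine ⟨fun p hp => ?_, fun i σ hσ => map_zero _⟩
    simp [MvPolynomial.vars_0] at hp
  smul_mem' := by
    rintro c f ⟨hf1, hf2⟩
    refine ⟨fun p hp => hf1 p (vars_smul_subset c f hp), fun i σ hσ => ?_⟩
    rw [map_smul, hf2 i σ hσ]

/-- Polynomials all of whose variables sit at vertex `i`. -/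
noncomputable def onlyVertex (i : Fin n) : Submodule ℚ (PolyQ n) where
  carrier := {f | ∀ p ∈ f.vars, p.1 = i}
  add_mem' := by
    intro f g hf hg p hp
    rcases Finset.mem_union.mp (MvPolynomial.vars_add_subset f g hp) with h | h
    exacts [hf p h, hg p h]
  zero_mem' := by
    intro p hp
    simp [MvPolynomial.vars_0] at hp
  smul_mem' := by
    intro c f hf p hp
    exact hf p (vars_smul_subset c f hp)

/-- `𝒜_{β,m}`: the subspace of `ℋ_{m·β}` of polynomials depending only on the
variables `ω_{i,0},…,ω_{i,m−1}` at the distinguished vertex `i`. -/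
noncomputable def Aspace (β : Fin n → ℕ) (i : Fin n) (m : ℕ) : Submodule ℚ (PolyQ n) :=
  Hspace (fun v => m * β v) ⊓ onlyVertex i

/-- Substitute for the `j`-th variable at vertex `i` the variable `ω_{i,s}` where `s`
is the `j`-th element of `T i` in increasing order. -/
noncomputable def substAlong (T : Fin n → Finset ℕ) : PolyQ n →ₐ[ℚ] PolyQ n :=
  aeval fun p : Fin n × ℕ => X (p.1, ((T p.1).sort (· ≤ ·)).getD p.2 0)

/-- The index set of the Kontsevich–Soibelman localization sum:
for each vertex, a `γ₁ i`-element subset of `{0,…,γ₁ i + γ₂ i − 1}`. -/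
def shuffles (γ₁ γ₂ : Fin n → ℕ) : Finset (Fin n → Finset ℕ) :=
  Fintype.piFinset fun i => (Finset.range (γ₁ i + γ₂ i)).powerset.filter fun s => s.card = γ₁ i

def shuffleCompl (γ₁ γ₂ : Fin n → ℕ) (S : Fin n → Finset ℕ) : Fin n → Finset ℕ :=
  fun i => Finset.range (γ₁ i + γ₂ i) \ S i

/-- The numerator factor attached to the arrow `a`:
`∏_{j' ∈ S̄_{h a}} ∏_{j ∈ S_{t a}} (ω_{h a, j'} − ω_{t a, j})`. -/
noncomputable def arrowFactor (Q : FinQuiver n) (γ₁ γ₂ : Fin n → ℕ)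
    (S : Fin n → Finset ℕ) (a : Q.Arr) : PolyQ n :=
  ∏ j' ∈ shuffleCompl γ₁ γ₂ S (Q.hd a), ∏ j ∈ S (Q.tl a),
    (X (Q.hd a, j') - X (Q.tl a, j))

noncomputable def interactionNum (Q : FinQuiver n) (γ₁ γ₂ : Fin n → ℕ)
    (S : Fin n → Finset ℕ) : PolyQ n :=
  ∏ a : Q.Arr, arrowFactor Q γ₁ γ₂ S a

noncomputable def interactionDen (γ₁ γ₂ : Fin n → ℕ) (S : Fin n → Finset ℕ) : PolyQ n :=
  ∏ i : Fin n, ∏ j' ∈ shuffleCompl γ₁ γ₂ S i, ∏ j ∈ S i, (X (i, j') - X (i, j))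

/-- The Kontsevich–Soibelman localization sum, an element of the field of rational
functions (the fraction field of `PolyQ n`). -/
noncomputable def cohaMulRat (Q : FinQuiver n) (γ₁ γ₂ : Fin n → ℕ) (f₁ f₂ : PolyQ n) :
    FractionRing (PolyQ n) :=
  ∑ S ∈ shuffles γ₁ γ₂,
    algebraMap (PolyQ n) (FractionRing (PolyQ n))
        (substAlong S f₁ * substAlong (shuffleCompl γ₁ γ₂ S) f₂ * interactionNum Q γ₁ γ₂ S) /
      algebraMap (PolyQ n) (FractionRing (PolyQ n)) (interactionDen γ₁ γ₂ S)

/-- The CoHA product `f₁ * f₂`: the unique polynomial representing the localization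
sum (and `0` if the sum were not a polynomial, which never happens). -/
noncomputable def cohaMul (Q : FinQuiver n) (γ₁ γ₂ : Fin n → ℕ) (f₁ f₂ : PolyQ n) : PolyQ n :=
  if h : ∃ P : PolyQ n,
      algebraMap (PolyQ n) (FractionRing (PolyQ n)) P = cohaMulRat Q γ₁ γ₂ f₁ f₂ then
    h.choose
  else 0

/-- Iterated, left-to-right, CoHA product of a list of dimension-vector/polynomial pairs.
Returns the total dimension vector together with the product. -/
noncomputable def cohaProd (Q : FinQuiver n) :
    List ((Fin n → ℕ) × PolyQ n) → (Fin n → ℕ) × PolyQ n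
  | [] => (fun _ => 0, 1)
  | x :: xs => xs.foldl (fun acc y => (acc.1 + y.1, cohaMul Q acc.1 y.1 acc.2 y.2)) x

/-- Left-to-right CoHA product `f 0 * f 1 * ⋯ * f (r−1)` with `f u ∈ ℋ_{γ u}`. -/
noncomputable def cohaProdFin (Q : FinQuiver n) {r : ℕ} (γ : Fin r → Fin n → ℕ)
    (f : Fin r → PolyQ n) : PolyQ n :=
  (cohaProd Q (List.ofFn fun u => (γ u, f u))).2

/-- The quiver with one vertex and no arrows. -/
def A1 : FinQuiver 1 := { Arr := Empty, hd := Empty.elim, tl := Empty.elim }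

/-- `ψ_p = x₁ ^ p ∈ ℋ₁(A₁)`. -/
noncomputable def psi (p : ℕ) : PolyQ 1 := X ((0 : Fin 1), 0) ^ p

def oneDim : Fin 1 → ℕ := fun _ => 1

/-- The simple dimension vector `e_i`. -/
def simpleDim (i : Fin n) : Fin n → ℕ := fun v => if v = i then 1 else 0

/-- A subquiver of `Q`. -/
structure Subquiver (Q : FinQuiver n) where
  verts : Finset (Fin n)
  arrows : Finset Q.Arr
  hd_mem : ∀ a ∈ arrows, Q.hd a ∈ verts
  tl_mem : ∀ a ∈ arrows, Q.tl a ∈ verts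

def Subquiver.Full {Q : FinQuiver n} (Q' : Subquiver Q) : Prop :=
  ∀ a : Q.Arr, Q.hd a ∈ Q'.verts → Q.tl a ∈ Q'.verts → a ∈ Q'.arrows

/-- Adjacency in the underlying undirected graph of a subquiver. -/
def Subquiver.Adj {Q : FinQuiver n} (Q' : Subquiver Q) (x y : Fin n) : Prop :=
  ∃ a ∈ Q'.arrows, (Q.hd a = x ∧ Q.tl a = y) ∨ (Q.hd a = y ∧ Q.tl a = x)

def Subquiver.Connected {Q : FinQuiver n} (Q' : Subquiver Q) : Prop :=
  ∀ x ∈ Q'.verts, ∀ y ∈ Q'.verts, Relation.ReflTransGen Q'.Adj x y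

/-- The Euler form of the subquiver `Q'` (on `ℤ`-valued vectors). -/
def Subquiver.eulerZ {Q : FinQuiver n} (Q' : Subquiver Q) (α β : Fin n → ℤ) : ℤ :=
  ∑ i ∈ Q'.verts, α i * β i - ∑ a ∈ Q'.arrows, α (Q.tl a) * β (Q.hd a)

/-- Positive definiteness of the Tits form of `Q'` on vectors supported on `Q'`. -/
def Subquiver.PosDefTits {Q : FinQuiver n} (Q' : Subquiver Q) : Prop :=
  ∀ β : Fin n → ℤ, (∀ i, i ∉ Q'.verts → β i = 0) → β ≠ 0 → 0 < Q'.eulerZ β β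

/-- A connected full subquiver with positive definite Tits form. -/
def Subquiver.IsDynkin {Q : FinQuiver n} (Q' : Subquiver Q) : Prop :=
  Q'.Connected ∧ Q'.Full ∧ Q'.PosDefTits

/-- A positive root of `Q'`: a nonzero dimension vector supported on `Q'` with
Tits form equal to `1`. -/
def Subquiver.IsPosRoot {Q : FinQuiver n} (Q' : Subquiver Q) (β : Fin n → ℕ) : Prop :=
  (∀ i, i ∉ Q'.verts → β i = 0) ∧ β ≠ 0 ∧
    Q'.eulerZ (fun i => (β i : ℤ)) (fun i => (β i : ℤ)) = 1

/-- A subquiver regarded as a quiver in its own right (on the ambient vertex set). -/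
def Subquiver.toQuiver {Q : FinQuiver n} (Q' : Subquiver Q) : FinQuiver n :=
  { Arr := {a : Q.Arr // a ∈ Q'.arrows}, hd := fun a => Q.hd a.1, tl := fun a => Q.tl a.1 }

/-- An (ordered list) subquiver partition `𝒬• = (Q¹,…,Q^ℓ)`: nonempty connected
subquivers whose vertex sets partition `Q₀`. -/
structure SubqPartition (Q : FinQuiver n) (ℓ : ℕ) where
  part : Fin ℓ → Subquiver Q
  nonempty' : ∀ j, (part j).verts.Nonempty
  connected' : ∀ j, (part j).Connected
  cover : ∀ i : Fin n, ∃! j, i ∈ (part j).verts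

/-- The set `𝒬•₁` of arrows belonging to one of the parts. -/
noncomputable def SubqPartition.arrs {Q : FinQuiver n} {ℓ : ℕ} (P : SubqPartition Q ℓ) : Finset Q.Arr :=
  Finset.univ.biUnion fun j => (P.part j).arrows

/-- The partition is admissible and ordered: every arrow not inside a part goes from a
later part to an earlier part (head before tail). -/
def SubqPartition.Ordered {Q : FinQuiver n} {ℓ : ℕ} (P : SubqPartition Q ℓ) : Prop :=
  ∀ a : Q.Arr, a ∉ P.arrs → ∀ i j : Fin ℓ,
    Q.hd a ∈ (P.part i).verts → Q.tl a ∈ (P.part j).verts → i < j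

/-- Every part is a Dynkin subquiver. -/
def SubqPartition.Dynkin {Q : FinQuiver n} {ℓ : ℕ} (P : SubqPartition Q ℓ) : Prop :=
  ∀ j, (P.part j).IsDynkin

/-- `β : Fin r → (Fin n → ℕ)` is a Reineke-ordered enumeration of `Φ₊(𝒬•)`, with
`blk u` the part to which `β u` belongs: block-monotone, enumerating all positive roots
without repetition, and within each block `u < v → ⟨β u, β v⟩ ≥ 0`. -/
def IsReinekeOrder {Q : FinQuiver n} {ℓ : ℕ} (P : SubqPartition Q ℓ) {r : ℕ}
    (β : Fin r → Fin n → ℕ) (blk : Fin r → Fin ℓ) : Prop :=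
  Monotone blk ∧
  (∀ u, (P.part (blk u)).IsPosRoot (β u)) ∧
  Function.Injective β ∧
  (∀ j (b : Fin n → ℕ), (P.part j).IsPosRoot b → ∃ u, β u = b) ∧
  (∀ u v : Fin r, u < v → blk u = blk v → 0 ≤ Q.lam (β u) (β v))

noncomputable section SchurCoha

/-- The variable `x_j`. -/
def xv (j : ℕ) : PolyQ 1 := X ((0 : Fin 1), j)

lemma xv_inj {a b : ℕ} (h : xv a = xv b) : a = b := by
  have := MvPolynomial.X_injective h
  exact (Prod.ext_iff.mp this).2

lemma xv_sub_ne_zero {a b : ℕ} (h : a ≠ b) : xv a - xv b ≠ 0 :=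
  sub_ne_zero.mpr fun hh => h (xv_inj hh)

/-- the set of ordered pairs `i < j` in `Fin k`. -/
def PPairs (k : ℕ) : Finset (Fin k × Fin k) := Finset.univ.filter fun p => p.1 < p.2

def Wpol (k : ℕ) : PolyQ 1 := ∏ p ∈ PPairs k, (xv p.2 - xv p.1)

def Amat (q : ℕ → ℕ) (k : ℕ) : Matrix (Fin k) (Fin k) (PolyQ 1) :=
  Matrix.of fun i j => xv i ^ q j

def Adet (q : ℕ → ℕ) (k : ℕ) : PolyQ 1 := (Amat q k).det

lemma wpol_ne_zero (k : ℕ) : Wpol k ≠ 0 := by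
  rw [Wpol, Finset.prod_ne_zero_iff]
  intro p hp
  have hlt : p.1 < p.2 := (Finset.mem_filter.mp hp).2
  exact xv_sub_ne_zero (by simp [Fin.val_ne_iff]; exact (ne_of_lt hlt).symm)

lemma prime_X_sub_X {σ : Type*} {u v : σ} (huv : u ≠ v) :
    Prime (X u - X v : MvPolynomial σ ℚ) := by
  classical
  set φ : MvPolynomial σ ℚ →ₐ[ℚ] MvPolynomial σ ℚ :=
    aeval (fun c => if c = u then X v else X c) with hφdef
  have key : ∀ f : MvPolynomial σ ℚ, (X u - X v) ∣ (f - φ f) := by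
    intro f
    induction f using MvPolynomial.induction_on with
    | C a => simp [φ]
    | add f g hf hg =>
        rw [map_add, add_sub_add_comm]
        exact dvd_add hf hg
    | mul_X f c hf =>
        rw [map_mul, aeval_X]
        by_cases hc : c = u
        · rw [if_pos hc, hc]
          have : f * X u - φ f * X v = (f - φ f) * X u + φ f * (X u - X v) := by ring
          rw [this]
          exact dvd_add (hf.mul_right _) (Dvd.intro_left _ rfl)
        · rw [if_neg hc]
          have : f * X c - φ f * X c = (f - φ f) * X c := by ring
          rw [this]
          exact hf.mul_right _
  have hφπ : φ (X u - X v) = 0 := by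
    rw [map_sub, aeval_X, aeval_X, if_pos rfl, if_neg (Ne.symm huv), sub_self]
  have hmem : ∀ f : MvPolynomial σ ℚ, φ f = 0 → (X u - X v) ∣ f := by
    intro f h
    simpa [h] using key f
  refine ⟨sub_ne_zero.mpr fun h => huv (MvPolynomial.X_injective h), ?_, ?_⟩
  · intro hu
    obtain ⟨g, hg⟩ := isUnit_iff_exists_inv.mp hu
    have := congrArg (MvPolynomial.eval (fun _ => (0 : ℚ))) hg
    simp at this
  · intro a b hab
    have h0 : φ (a * b) = 0 := by
      obtain ⟨c, hc⟩ := hab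
      rw [hc, map_mul, hφπ, zero_mul]
    rw [map_mul] at h0
    rcases mul_eq_zero.mp h0 with h | h
    · exact Or.inl (hmem a h)
    · exact Or.inr (hmem b h)

lemma prod_dvd_of_primes {R : Type*} [CommRing R] [IsDomain R] {ι : Type*} [DecidableEq ι]
    {s : Finset ι} {f : ι → R} {z : R}
    (hp : ∀ i ∈ s, Prime (f i))
    (hnd : ∀ i ∈ s, ∀ j ∈ s, i ≠ j → ¬ f i ∣ f j)
    (hdvd : ∀ i ∈ s, f i ∣ z) : (∏ i ∈ s, f i) ∣ z := by
  induction s using Finset.induction_on generalizing z with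
  | empty => simpa using one_dvd z
  | @insert a s ha ih =>
    obtain ⟨z', rfl⟩ := hdvd a (Finset.mem_insert_self a s)
    rw [Finset.prod_insert ha]
    refine mul_dvd_mul_left (f a) (ih ?_ ?_ ?_)
    · intro i hi; exact hp i (Finset.mem_insert_of_mem hi)
    · intro i hi j hj hij
      exact hnd i (Finset.mem_insert_of_mem hi) j (Finset.mem_insert_of_mem hj) hij
    · intro i hi
      have h1 : f i ∣ f a * z' := hdvd i (Finset.mem_insert_of_mem hi)
      rcases (hp i (Finset.mem_insert_of_mem hi)).dvd_or_dvd h1 with h | h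
      · exact absurd h (hnd i (Finset.mem_insert_of_mem hi) a (Finset.mem_insert_self a s)
          (fun hia => ha (hia ▸ hi)))
      · exact h

lemma wpol_dvd_adet (q : ℕ → ℕ) (k : ℕ) : Wpol k ∣ Adet q k := by
  rw [Wpol]
  refine prod_dvd_of_primes ?_ ?_ ?_
  · intro p hp
    have hlt : p.1 < p.2 := (Finset.mem_filter.mp hp).2
    exact prime_X_sub_X (by simp [Prod.ext_iff, Fin.val_ne_iff]; exact (ne_of_lt hlt).symm)
  · intro p hp p' hp' hne hdvd
    have h1 : (p.1 : ℕ) < (p.2 : ℕ) := (Finset.mem_filter.mp hp).2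
    have h1' : (p'.1 : ℕ) < (p'.2 : ℕ) := (Finset.mem_filter.mp hp').2
    have hnepair : ¬ ((p.1 : ℕ) = (p'.1 : ℕ) ∧ (p.2 : ℕ) = (p'.2 : ℕ)) := by
      rintro ⟨hac, hbd⟩
      exact hne (Prod.ext (Fin.val_injective hac) (Fin.val_injective hbd))
    have hm : ∃ m : ℕ, (m = (p'.1 : ℕ) ∨ m = (p'.2 : ℕ)) ∧ m ≠ (p.1 : ℕ) ∧ m ≠ (p.2 : ℕ) := by
      by_cases hca : (p'.1 : ℕ) ≠ (p.1 : ℕ) ∧ (p'.1 : ℕ) ≠ (p.2 : ℕ)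
      · exact ⟨p'.1, Or.inl rfl, hca⟩
      · by_cases hda : (p'.2 : ℕ) ≠ (p.1 : ℕ) ∧ (p'.2 : ℕ) ≠ (p.2 : ℕ)
        · exact ⟨p'.2, Or.inr rfl, hda⟩
        · exfalso; push_neg at hca hda; omega
    obtain ⟨m, hm1, hma, hmb⟩ := hm
    have hev := map_dvd
      (MvPolynomial.eval (fun v : Fin 1 × ℕ => if v.2 = m then (1 : ℚ) else 0)) hdvd
    rw [map_sub, map_sub] at hev
    simp only [xv, MvPolynomial.eval_X] at hev
    rcases hm1 with heq | heq
    · rw [if_neg (by omega : (p.2 : ℕ) ≠ m), if_neg (by omega : (p.1 : ℕ) ≠ m),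
        if_neg (by omega : (p'.2 : ℕ) ≠ m), if_pos heq.symm] at hev
      norm_num at hev
    · rw [if_neg (by omega : (p.2 : ℕ) ≠ m), if_neg (by omega : (p.1 : ℕ) ≠ m),
        if_pos heq.symm, if_neg (by omega : (p'.1 : ℕ) ≠ m)] at hev
      norm_num at hev
  · intro p hp
    have hlt : p.1 < p.2 := (Finset.mem_filter.mp hp).2
    have hne : p.1 ≠ p.2 := ne_of_lt hlt
    set M := Amat q k with hM
    have h1 : (M.updateRow p.1 (M p.1 + (-1 : PolyQ 1) • M p.2)).det = M.det :=
      Matrix.det_updateRow_add_smul_self M hne (-1)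
    have hrow : M p.1 + (-1 : PolyQ 1) • M p.2
        = (xv p.1 - xv p.2) •
          (fun t : Fin k => ∑ i ∈ Finset.range (q ↑t), xv ↑p.1 ^ i * xv ↑p.2 ^ (q ↑t - 1 - i)) := by
      funext t
      simp only [Pi.add_apply, Pi.smul_apply, smul_eq_mul, hM, Amat, Matrix.of_apply]
      rw [mul_comm ((xv p.1 - xv p.2)) _, geom_sum₂_mul]
      ring
    refine ⟨-((M.updateRow p.1
      (fun t : Fin k => ∑ i ∈ Finset.range (q ↑t), xv ↑p.1 ^ i * xv ↑p.2 ^ (q ↑t - 1 - i))).det), ?_⟩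
    rw [Adet, ← h1, hrow, Matrix.det_updateRow_smul]
    ring

def Sq (q : ℕ → ℕ) (k : ℕ) : PolyQ 1 := (wpol_dvd_adet q k).choose

lemma Sq_spec (q : ℕ → ℕ) (k : ℕ) : Sq q k * Wpol k = Adet q k := by
  have h := (wpol_dvd_adet q k).choose_spec
  rw [Sq, mul_comm, ← h]

lemma Sq_unique {q : ℕ → ℕ} {k : ℕ} {F : PolyQ 1} (h : F * Wpol k = Adet q k) : F = Sq q k :=
  mul_right_cancel₀ (wpol_ne_zero k) (by rw [h, Sq_spec])

/-- insertion map: the `j`-th element of `{0,…,k} \ {t}` in increasing order. -/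
def eIns (t j : ℕ) : ℕ := if j < t then j else j + 1

lemma eIns_injective (t : ℕ) : Function.Injective (eIns t) := by
  intro a b h
  unfold eIns at h
  split_ifs at h <;> omega

lemma eIns_strictMono (t : ℕ) : StrictMono (eIns t) := by
  intro a b h
  unfold eIns
  split_ifs <;> omega

lemma map_eIns_range (k t : ℕ) (ht : t < k + 1) :
    Finset.map ⟨eIns t, eIns_injective t⟩ (Finset.range k) = Finset.range (k + 1) \ {t} := by
  ext m
  simp only [Finset.mem_map, Finset.mem_range, Finset.mem_sdiff, Finset.mem_singleton,
    Function.Embedding.coeFn_mk]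
  constructor
  · rintro ⟨j, hj, rfl⟩
    unfold eIns
    split_ifs <;> omega
  · intro hm
    by_cases hmt : m < t
    · exact ⟨m, by omega, by unfold eIns; rw [if_pos hmt]⟩
    · refine ⟨m - 1, by omega, ?_⟩
      unfold eIns
      rw [if_neg (by omega)]
      omega

lemma sortCompl (k t : ℕ) (ht : t < k + 1) :
    (Finset.range (k + 1) \ {t}).sort (· ≤ ·) = List.map (eIns t) (List.range k) := by
  apply List.Perm.eq_of_pairwise' (r := (· ≤ ·)) (Finset.pairwise_sort _ _) ?_ ?_
  · -- sortedness of the map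
    exact List.Pairwise.map _ (fun a b h => le_of_lt (eIns_strictMono t h))
      (List.pairwise_lt_range (n := k))
  · -- the permutation property
    refine (Finset.sort_perm_toList _ _).trans ?_
    rw [← Multiset.coe_eq_coe, Finset.coe_toList, ← Multiset.map_coe]
    have : ((List.range k : List ℕ) : Multiset ℕ) = (Finset.range k).val := rfl
    rw [this, ← map_eIns_range k t ht, Finset.map_val]
    rfl

lemma sortCompl_getD (k t j : ℕ) (ht : t < k + 1) (hj : j < k) :
    (((Finset.range (k + 1) \ {t}).sort (· ≤ ·)).getD j 0) = eIns t j := by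
  rw [sortCompl k t ht]
  have hlen : j < (List.map (eIns t) (List.range k)).length := by simpa using hj
  rw [List.getD_eq_getElem _ _ hlen, List.getElem_map, List.getElem_range]

lemma val_succAbove {k : ℕ} (t : Fin (k + 1)) (a : Fin k) :
    ((t.succAbove a : Fin (k + 1)) : ℕ) = eIns (t : ℕ) (a : ℕ) := by
  rcases lt_or_ge (a.castSucc) t with h | h
  · rw [Fin.succAbove_of_castSucc_lt _ _ h]
    unfold eIns
    rw [if_pos (by simpa [Fin.lt_def] using h)]
    simp
  · rw [Fin.succAbove_of_le_castSucc _ _ h]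
    unfold eIns
    rw [if_neg (by simp only [Fin.le_def, Fin.coe_castSucc] at h; omega)]
    simp

/-- pairs avoiding `t` ↔ pairs of `Fin k` via `succAbove`. -/
lemma prod_pairs_avoid (k : ℕ) (t : Fin (k + 1)) (f : Fin (k + 1) → Fin (k + 1) → PolyQ 1) :
    ∏ p ∈ PPairs k, f (t.succAbove p.1) (t.succAbove p.2)
      = ∏ p ∈ (PPairs (k + 1)).filter (fun p => p.1 ≠ t ∧ p.2 ≠ t), f p.1 p.2 := by
  refine Finset.prod_bij (fun p _ => (t.succAbove p.1, t.succAbove p.2)) ?_ ?_ ?_ ?_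
  · intro p hp
    have hlt : p.1 < p.2 := (Finset.mem_filter.mp hp).2
    simp only [Finset.mem_filter, PPairs, Finset.mem_univ, true_and]
    exact ⟨Fin.succAbove_lt_succAbove_iff.mpr hlt, Fin.succAbove_ne t p.1, Fin.succAbove_ne t p.2⟩
  · intro p hp p' hp' h
    have h1 := congrArg Prod.fst h
    have h2 := congrArg Prod.snd h
    simp only at h1 h2
    exact Prod.ext (Fin.succAbove_right_injective h1) (Fin.succAbove_right_injective h2)
  · intro b hb
    simp only [Finset.mem_filter, PPairs, Finset.mem_univ, true_and] at hb
    obtain ⟨hlt, h1, h2⟩ := hb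
    obtain ⟨a1, ha1⟩ := Fin.exists_succAbove_eq h1
    obtain ⟨a2, ha2⟩ := Fin.exists_succAbove_eq h2
    refine ⟨(a1, a2), ?_, by simp [ha1, ha2]⟩
    simp only [Finset.mem_filter, PPairs, Finset.mem_univ, true_and]
    rw [← Fin.succAbove_lt_succAbove_iff (p := t), ha1, ha2]
    exact hlt
  · intro p hp
    rfl

lemma prod_pairs_snd_eq (k : ℕ) (t : Fin (k + 1)) (f : Fin (k + 1) → Fin (k + 1) → PolyQ 1) :
    ∏ p ∈ (PPairs (k + 1)).filter (fun p => p.2 = t), f p.1 p.2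
      = ∏ j ∈ Finset.Iio t, f j t := by
  refine (Finset.prod_bij (fun (j : Fin (k+1)) _ => ((j, t) : Fin (k+1) × Fin (k+1))) ?_ ?_ ?_ ?_).symm
  · intro j hj
    exact Finset.mem_filter.mpr ⟨Finset.mem_filter.mpr ⟨Finset.mem_univ _,
      Finset.mem_Iio.mp hj⟩, rfl⟩
  · intro a _ b _ h
    exact (Prod.ext_iff.mp h).1
  · intro p hp
    simp only [Finset.mem_filter, PPairs, Finset.mem_univ, true_and] at hp
    obtain ⟨hlt, h2⟩ := hp
    obtain ⟨p1, p2⟩ := p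
    simp only at hlt h2
    subst h2
    exact ⟨p1, Finset.mem_Iio.mpr hlt, rfl⟩
  · intro j _
    rfl

lemma prod_pairs_fst_eq (k : ℕ) (t : Fin (k + 1)) (f : Fin (k + 1) → Fin (k + 1) → PolyQ 1) :
    ∏ p ∈ (PPairs (k + 1)).filter (fun p => p.2 ≠ t ∧ p.1 = t), f p.1 p.2
      = ∏ j ∈ Finset.Ioi t, f t j := by
  refine (Finset.prod_bij (fun (j : Fin (k+1)) _ => ((t, j) : Fin (k+1) × Fin (k+1))) ?_ ?_ ?_ ?_).symm
  · intro j hj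
    have hlt : t < j := Finset.mem_Ioi.mp hj
    exact Finset.mem_filter.mpr ⟨Finset.mem_filter.mpr ⟨Finset.mem_univ _, hlt⟩,
      (ne_of_lt hlt).symm, rfl⟩
  · intro a _ b _ h
    exact (Prod.ext_iff.mp h).2
  · intro p hp
    simp only [Finset.mem_filter, PPairs, Finset.mem_univ, true_and] at hp
    obtain ⟨hlt, _, h1⟩ := hp
    obtain ⟨p1, p2⟩ := p
    simp only at hlt h1
    subst h1
    exact ⟨p2, Finset.mem_Ioi.mpr hlt, rfl⟩
  · intro j _
    rfl

lemma erase_eq_Iio_union_Ioi {k : ℕ} (t : Fin (k + 1)) :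
    (Finset.univ : Finset (Fin (k + 1))).erase t = Finset.Iio t ∪ Finset.Ioi t := by
  ext j
  simp only [Finset.mem_erase, Finset.mem_univ, and_true, Finset.mem_union, Finset.mem_Iio,
    Finset.mem_Ioi]
  exact ⟨fun h => lt_or_gt_of_ne h, fun h => h.elim ne_of_lt ne_of_gt⟩

/-- The denominator `D_t = ∏_{j ≠ t} (x_t − x_j)` over ℕ indices. -/
def Dden (k t : ℕ) : PolyQ 1 := ∏ j ∈ Finset.range (k + 1) \ {t}, (xv t - xv j)

lemma dden_eq_fin (k : ℕ) (t : Fin (k + 1)) :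
    Dden k t = ∏ j ∈ (Finset.univ : Finset (Fin (k + 1))).erase t, (xv t - xv j) := by
  rw [Dden]
  refine (Finset.prod_bij (fun (j : Fin (k + 1)) _ => (j : ℕ)) ?_ ?_ ?_ ?_).symm
  · intro j hj
    have := Finset.mem_erase.mp hj
    simp only [Finset.mem_sdiff, Finset.mem_range, Finset.mem_singleton]
    exact ⟨j.isLt, fun h => this.1 (Fin.val_injective h)⟩
  · intro a _ b _ h
    exact Fin.val_injective h
  · intro m hm
    simp only [Finset.mem_sdiff, Finset.mem_range, Finset.mem_singleton] at hm
    refine ⟨⟨m, hm.1⟩, Finset.mem_erase.mpr ⟨?_, Finset.mem_univ _⟩, rfl⟩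
    intro h
    exact hm.2 (by rw [← h])
  · intro j _
    rfl

lemma dden_ne_zero (k t : ℕ) (ht : t < k + 1) : Dden k t ≠ 0 := by
  rw [Dden, Finset.prod_ne_zero_iff]
  intro j hj
  simp only [Finset.mem_sdiff, Finset.mem_range, Finset.mem_singleton] at hj
  exact xv_sub_ne_zero (fun h => hj.2 h.symm)

/-- Key product identity (P1). -/
lemma dden_mul_shift (k : ℕ) (t : Fin (k + 1)) :
    Dden k t * ∏ p ∈ PPairs k, (xv (t.succAbove p.2) - xv (t.succAbove p.1))
      = (-1 : PolyQ 1) ^ ((t : ℕ) + k) * Wpol (k + 1) := by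
  have hsplit : Wpol (k + 1)
      = (∏ j ∈ Finset.Iio t, (xv t - xv j)) *
        ((∏ j ∈ Finset.Ioi t, (xv j - xv t)) *
         (∏ p ∈ (PPairs (k + 1)).filter (fun p => p.1 ≠ t ∧ p.2 ≠ t), (xv p.2 - xv p.1))) := by
    rw [Wpol]
    rw [← Finset.prod_filter_mul_prod_filter_not (PPairs (k + 1)) (fun p => p.2 = t)
      (fun p => xv p.2 - xv p.1)]
    rw [← Finset.prod_filter_mul_prod_filter_not ((PPairs (k + 1)).filter (fun p => ¬ p.2 = t))
      (fun p => p.1 = t) (fun p => xv p.2 - xv p.1)]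
    rw [Finset.filter_filter, Finset.filter_filter]
    rw [prod_pairs_snd_eq k t (fun a b => xv b - xv a)]
    have e1 : ((PPairs (k+1)).filter fun p => ¬ p.2 = t ∧ p.1 = t)
        = ((PPairs (k+1)).filter fun p => p.2 ≠ t ∧ p.1 = t) := rfl
    have e2 : ((PPairs (k+1)).filter fun p => ¬ p.2 = t ∧ ¬ p.1 = t)
        = ((PPairs (k+1)).filter fun p => p.1 ≠ t ∧ p.2 ≠ t) := by
      apply Finset.filter_congr
      intro p _
      constructor
      · rintro ⟨h2, h1⟩; exact ⟨h1, h2⟩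
      · rintro ⟨h1, h2⟩; exact ⟨h2, h1⟩
    rw [e1, e2, prod_pairs_fst_eq k t (fun a b => xv b - xv a)]
    all_goals ring
  have hIoi : (∏ j ∈ Finset.Ioi t, (xv j - xv t))
      = (-1 : PolyQ 1) ^ (k - (t : ℕ)) * ∏ j ∈ Finset.Ioi t, (xv t - xv j) := by
    have : ∀ j ∈ Finset.Ioi t, (xv j - xv t : PolyQ 1) = (-1) * (xv t - xv j) := by
      intro j _; ring
    rw [Finset.prod_congr rfl this, Finset.prod_mul_distrib, Finset.prod_const, Fin.card_Ioi]
    norm_num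
  have hD : Dden k t = (∏ j ∈ Finset.Iio t, (xv t - xv j)) * ∏ j ∈ Finset.Ioi t, (xv t - xv j) := by
    rw [dden_eq_fin, erase_eq_Iio_union_Ioi, Finset.prod_union]
    exact Finset.disjoint_left.mpr fun j h1 h2 =>
      absurd (Finset.mem_Iio.mp h1) (not_lt.mpr (le_of_lt (Finset.mem_Ioi.mp h2)))
  have hpow : ((-1 : PolyQ 1) ^ ((t : ℕ) + k)) * ((-1) ^ (k - (t : ℕ))) = 1 := by
    rw [← pow_add]
    have hle : (t : ℕ) ≤ k := Nat.lt_succ_iff.mp t.isLt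
    have : (t : ℕ) + k + (k - (t : ℕ)) = 2 * k := by omega
    rw [this, pow_mul]
    norm_num
  rw [prod_pairs_avoid k t (fun a b => xv b - xv a), hsplit, hD, hIoi]
  -- now pure algebra with hpow
  linear_combination (-(∏ j ∈ Finset.Iio t, (xv ↑t - xv ↑j)) *
    (∏ j ∈ Finset.Ioi t, (xv ↑t - xv ↑j)) *
    (∏ p ∈ (PPairs (k+1)).filter (fun p => p.1 ≠ t ∧ p.2 ≠ t), (xv ↑p.2 - xv ↑p.1))) * hpow

lemma substAlong_xv (k t j : ℕ) (ht : t < k + 1) (hj : j < k) :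
    substAlong (fun _ : Fin 1 => Finset.range (k + 1) \ {t}) (xv j) = xv (eIns t j) := by
  rw [substAlong, xv, aeval_X, sortCompl_getD k t j ht hj]
  rfl

lemma subst_wpol (k : ℕ) (t : Fin (k + 1)) :
    substAlong (fun _ : Fin 1 => Finset.range (k + 1) \ {(t : ℕ)}) (Wpol k)
      = ∏ p ∈ PPairs k, (xv (t.succAbove p.2) - xv (t.succAbove p.1)) := by
  rw [Wpol, map_prod]
  refine Finset.prod_congr rfl fun p _ => ?_
  rw [map_sub, substAlong_xv k t p.2 t.isLt p.2.isLt, substAlong_xv k t p.1 t.isLt p.1.isLt,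
    ← val_succAbove, ← val_succAbove]

lemma subst_adet (q : ℕ → ℕ) (k : ℕ) (t : Fin (k + 1)) :
    substAlong (fun _ : Fin 1 => Finset.range (k + 1) \ {(t : ℕ)}) (Adet q k)
      = (Matrix.of fun a b : Fin k => xv (t.succAbove a) ^ q b).det := by
  rw [Adet]
  rw [show (substAlong (fun _ : Fin 1 => Finset.range (k + 1) \ {(t : ℕ)}) ((Amat q k).det))
      = ((substAlong (fun _ : Fin 1 => Finset.range (k + 1) \ {(t : ℕ)})).toRingHom.mapMatrix
          (Amat q k)).det from RingHom.map_det _ _]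
  congr 1
  ext a b
  simp only [RingHom.mapMatrix_apply, Matrix.map_apply, AlgHom.toRingHom_eq_coe,
    RingHom.coe_coe, Amat, Matrix.of_apply]
  rw [map_pow, substAlong_xv k t a t.isLt a.isLt, ← val_succAbove]

lemma shift_wpol_ne_zero (k : ℕ) (t : Fin (k + 1)) :
    (∏ p ∈ PPairs k, (xv (t.succAbove p.2) - xv (t.succAbove p.1))) ≠ 0 := by
  rw [Finset.prod_ne_zero_iff]
  intro p hp
  have hlt : p.1 < p.2 := (Finset.mem_filter.mp hp).2
  have : t.succAbove p.1 < t.succAbove p.2 := Fin.succAbove_lt_succAbove_iff.mpr hlt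
  exact xv_sub_ne_zero (by simp [Fin.val_ne_iff]; exact (ne_of_lt hlt).symm)

/-- Laplace expansion of the `(k+1)×(k+1)` determinant along the last column. -/
lemma adet_succ (q : ℕ → ℕ) (k : ℕ) :
    Adet q (k + 1) = ∑ t : Fin (k + 1), (-1 : PolyQ 1) ^ ((t : ℕ) + k) *
      (xv t ^ q k * (Matrix.of fun a b : Fin k => xv (t.succAbove a) ^ q b).det) := by
  rw [Adet, Matrix.det_succ_column (Amat q (k + 1)) (Fin.last k)]
  refine Finset.sum_congr rfl fun t _ => ?_
  rw [Fin.val_last]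
  have h1 : Amat q (k + 1) t (Fin.last k) = xv t ^ q k := by
    simp [Amat, Fin.val_last]
  have h2 : (Amat q (k + 1)).submatrix t.succAbove (Fin.last k).succAbove
      = Matrix.of fun a b : Fin k => xv (t.succAbove a) ^ q b := by
    ext a b
    simp [Amat, Matrix.submatrix_apply, Fin.succAbove_last, Fin.coe_castSucc]
  rw [h1, h2]
  ring

abbrev FR := FractionRing (PolyQ 1)

lemma subst_psi (tn p : ℕ) :
    substAlong (fun _ : Fin 1 => ({tn} : Finset ℕ)) (psi p) = xv tn ^ p := by
  rw [psi, substAlong, map_pow, aeval_X, xv]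
  congr 2
  rw [Finset.sort_singleton]
  rfl

lemma inum_eq_one (γ₁ γ₂ : Fin 1 → ℕ) (S : Fin 1 → Finset ℕ) :
    interactionNum A1 γ₁ γ₂ S = 1 := by
  haveI : IsEmpty A1.Arr := ⟨fun a => a.elim⟩
  rw [interactionNum]
  exact Finset.prod_of_isEmpty _

lemma shuffleCompl_eq (k tn : ℕ) (htn : tn < k + 1) :
    shuffleCompl (fun _ => k) oneDim (fun _ : Fin 1 => Finset.range (k + 1) \ {tn})
      = fun _ : Fin 1 => ({tn} : Finset ℕ) := by
  funext i
  show Finset.range (k + 1) \ (Finset.range (k + 1) \ {tn}) = {tn}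
  exact Finset.sdiff_sdiff_eq_self (by simpa using htn)

lemma iden_eq (k tn : ℕ) (htn : tn < k + 1) :
    interactionDen (fun _ => k) oneDim (fun _ : Fin 1 => Finset.range (k + 1) \ {tn})
      = Dden k tn := by
  rw [interactionDen, Fin.prod_univ_one]
  have h := congrFun (shuffleCompl_eq k tn htn) 0
  rw [h, Finset.prod_singleton]
  rfl

lemma cohaMulRat_eq (k : ℕ) (F G : PolyQ 1) :
    cohaMulRat A1 (fun _ => k) oneDim F G
      = ∑ tn ∈ Finset.range (k + 1),
          algebraMap (PolyQ 1) FR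
            (substAlong (fun _ : Fin 1 => Finset.range (k + 1) \ {tn}) F *
             substAlong (fun _ : Fin 1 => ({tn} : Finset ℕ)) G) /
          algebraMap (PolyQ 1) FR (Dden k tn) := by
  rw [cohaMulRat]
  refine (Finset.sum_bij (fun tn (h : tn ∈ Finset.range (k + 1)) =>
      (fun _ : Fin 1 => Finset.range (k + 1) \ {tn})) ?_ ?_ ?_ ?_).symm
  · intro tn htn
    rw [shuffles, Fintype.mem_piFinset]
    intro i
    rw [Finset.mem_filter, Finset.mem_powerset]
    constructor
    · show Finset.range (k + 1) \ {tn} ⊆ Finset.range (k + oneDim i)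
      exact Finset.sdiff_subset
    · show (Finset.range (k + 1) \ {tn}).card = k
      rw [Finset.card_sdiff_of_subset (by simpa using htn)]
      simp
  · intro a ha b hb h
    have h2 : Finset.range (k + 1) \ {a} = Finset.range (k + 1) \ {b} := congrFun h 0
    by_contra hab
    have ha' : a ∈ Finset.range (k + 1) \ {b} := by
      simp [Finset.mem_range.mp ha, hab]
    rw [← h2] at ha'
    simp at ha'
  · intro S hS
    rw [shuffles, Fintype.mem_piFinset] at hS
    have h0 := hS 0
    rw [Finset.mem_filter, Finset.mem_powerset] at h0
    obtain ⟨hsub, hcard⟩ := h0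
    have hsub' : S 0 ⊆ Finset.range (k + 1) := hsub
    have hcard' : (Finset.range (k + 1) \ S 0).card = 1 := by
      rw [Finset.card_sdiff_of_subset hsub', Finset.card_range, hcard]
      omega
    obtain ⟨tn, htn⟩ := Finset.card_eq_one.mp hcard'
    have htn_mem : tn ∈ Finset.range (k + 1) := by
      have : tn ∈ Finset.range (k + 1) \ S 0 := htn ▸ Finset.mem_singleton_self tn
      exact (Finset.mem_sdiff.mp this).1
    refine ⟨tn, htn_mem, ?_⟩
    funext i
    have hi : i = 0 := Subsingleton.elim i 0
    rw [hi]
    show Finset.range (k + 1) \ {tn} = S 0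
    rw [← htn, Finset.sdiff_sdiff_eq_self hsub']
  · intro tn htn
    rw [inum_eq_one, mul_one, iden_eq k tn (Finset.mem_range.mp htn),
      shuffleCompl_eq k tn (Finset.mem_range.mp htn)]

lemma algebraMap_FR_injective : Function.Injective (algebraMap (PolyQ 1) FR) :=
  IsFractionRing.injective (PolyQ 1) FR

lemma algebraMap_FR_ne_zero {f : PolyQ 1} (h : f ≠ 0) : algebraMap (PolyQ 1) FR f ≠ 0 := by
  intro h0
  exact h (algebraMap_FR_injective (h0.trans (map_zero (algebraMap (PolyQ 1) FR)).symm))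

lemma step_cohaMul (q : ℕ → ℕ) (k : ℕ) (F : PolyQ 1) (hF : F * Wpol k = Adet q k) :
    cohaMul A1 (fun _ => k) oneDim F (psi (q k)) = Sq q (k + 1) := by
  set ι := algebraMap (PolyQ 1) FR with hι
  have main : ι (Sq q (k + 1)) = cohaMulRat A1 (fun _ => k) oneDim F (psi (q k)) := by
    rw [cohaMulRat_eq]
    rw [← Fin.sum_univ_eq_sum_range (fun tn =>
      ι (substAlong (fun _ : Fin 1 => Finset.range (k + 1) \ {tn}) F *
         substAlong (fun _ : Fin 1 => ({tn} : Finset ℕ)) (psi (q k))) / ι (Dden k tn)) (k + 1)]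
    have hterm : ∀ t : Fin (k + 1),
        ι (substAlong (fun _ : Fin 1 => Finset.range (k + 1) \ {(t : ℕ)}) F *
           substAlong (fun _ : Fin 1 => ({(t : ℕ)} : Finset ℕ)) (psi (q k))) / ι (Dden k t)
        = ι ((-1 : PolyQ 1) ^ ((t : ℕ) + k) *
            (xv t ^ q k * (Matrix.of fun a b : Fin k => xv (t.succAbove a) ^ q b).det)) /
          ι (Wpol (k + 1)) := by
      intro t
      have hD : Dden k t ≠ 0 := dden_ne_zero k t t.isLt
      have hW : Wpol (k + 1) ≠ 0 := wpol_ne_zero (k + 1)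
      rw [div_eq_div_iff (algebraMap_FR_ne_zero hD) (algebraMap_FR_ne_zero hW), ← map_mul,
        ← map_mul]
      congr 1
      -- polynomial identity
      have hσ : substAlong (fun _ : Fin 1 => Finset.range (k + 1) \ {(t : ℕ)}) F *
          (∏ p ∈ PPairs k, (xv (t.succAbove p.2) - xv (t.succAbove p.1)))
          = (Matrix.of fun a b : Fin k => xv (t.succAbove a) ^ q b).det := by
        rw [← subst_wpol, ← subst_adet, ← map_mul, hF]
      have hP1 := dden_mul_shift k t
      have hpow : ((-1 : PolyQ 1) ^ ((t : ℕ) + k)) * ((-1 : PolyQ 1) ^ ((t : ℕ) + k)) = 1 := by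
        rw [← pow_add]
        exact Even.neg_one_pow ⟨(t : ℕ) + k, by ring⟩
      rw [subst_psi]
      linear_combination ((-1 : PolyQ 1) ^ ((t : ℕ) + k) * xv (t : ℕ) ^ q k * Dden k t) * hσ -
        ((-1 : PolyQ 1) ^ ((t : ℕ) + k) * xv (t : ℕ) ^ q k *
          substAlong (fun _ : Fin 1 => Finset.range (k + 1) \ {(t : ℕ)}) F) * hP1 -
        (xv (t : ℕ) ^ q k *
          substAlong (fun _ : Fin 1 => Finset.range (k + 1) \ {(t : ℕ)}) F * Wpol (k + 1)) * hpow
    rw [Finset.sum_congr rfl fun t _ => hterm t, ← Finset.sum_div, ← map_sum, ← adet_succ]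
    rw [eq_div_iff (algebraMap_FR_ne_zero (wpol_ne_zero (k + 1))), ← map_mul, Sq_spec]
  rw [cohaMul]
  have hex : ∃ P : PolyQ 1, algebraMap (PolyQ 1) FR P
      = cohaMulRat A1 (fun _ => k) oneDim F (psi (q k)) := ⟨Sq q (k + 1), main⟩
  rw [dif_pos hex]
  exact algebraMap_FR_injective (hex.choose_spec.trans main.symm)

lemma psi_eq_Sq_one (q : ℕ → ℕ) : psi (q 0) = Sq q 1 := by
  apply Sq_unique
  have hW1 : Wpol 1 = 1 := by
    rw [Wpol]
    apply Finset.prod_eq_one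
    intro p hp
    have := (Finset.mem_filter.mp hp).2
    exact absurd this (by omega)
  have hA1 : Adet q 1 = xv 0 ^ q 0 := by
    rw [Adet, Matrix.det_fin_one]
    rfl
  rw [hW1, hA1, mul_one]
  rfl

lemma fold_lemma (q : ℕ → ℕ) (m : ℕ) : ∀ k : ℕ,
    (List.ofFn fun u : Fin m => ((oneDim, psi (q (k + (u : ℕ)))) : (Fin 1 → ℕ) × PolyQ 1)).foldl
        (fun acc y => (acc.1 + y.1, cohaMul A1 acc.1 y.1 acc.2 y.2))
        ((fun _ => k), Sq q k)
      = ((fun _ => k + m), Sq q (k + m)) := by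
  induction m with
  | zero =>
    intro k
    simp
  | succ m ih =>
    intro k
    rw [List.ofFn_succ]
    rw [List.foldl_cons]
    have hstep : ((fun (_ : Fin 1) => k) + oneDim,
        cohaMul A1 (fun _ => k) oneDim (Sq q k) (psi (q (k + ((0 : Fin (m+1)) : ℕ))))) =
        (((fun _ => k + 1) : Fin 1 → ℕ), Sq q (k + 1)) := by
      have h1 : ((fun (_ : Fin 1) => k) + oneDim) = fun _ => k + 1 := by
        funext i
        rfl
      have h2 : cohaMul A1 (fun _ => k) oneDim (Sq q k) (psi (q (k + ((0 : Fin (m+1)) : ℕ))))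
          = Sq q (k + 1) := by
        have : k + ((0 : Fin (m+1)) : ℕ) = k := by simp
        rw [this]
        exact step_cohaMul q k (Sq q k) (Sq_spec q k)
      rw [h1, h2]
    have hacc : (((fun _ => k, Sq q k) : (Fin 1 → ℕ) × PolyQ 1).1 +
          ((oneDim, psi (q (k + ((0 : Fin (m+1)) : ℕ)))) : (Fin 1 → ℕ) × PolyQ 1).1,
        cohaMul A1 ((fun _ => k, Sq q k) : (Fin 1 → ℕ) × PolyQ 1).1
          ((oneDim, psi (q (k + ((0 : Fin (m+1)) : ℕ)))) : (Fin 1 → ℕ) × PolyQ 1).1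
          ((fun _ => k, Sq q k) : (Fin 1 → ℕ) × PolyQ 1).2
          ((oneDim, psi (q (k + ((0 : Fin (m+1)) : ℕ)))) : (Fin 1 → ℕ) × PolyQ 1).2)
        = (((fun _ => k + 1) : Fin 1 → ℕ), Sq q (k + 1)) := hstep
    rw [hacc]
    have hfn : (fun u : Fin m => ((oneDim, psi (q (k + ((u.succ : Fin (m+1)) : ℕ)))) :
        (Fin 1 → ℕ) × PolyQ 1))
        = fun u : Fin m => ((oneDim, psi (q ((k + 1) + (u : ℕ)))) : (Fin 1 → ℕ) × PolyQ 1) := by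
      funext u
      have : k + ((u.succ : Fin (m+1)) : ℕ) = (k + 1) + (u : ℕ) := by
        rw [Fin.val_succ]; omega
      rw [this]
    rw [hfn, ih (k + 1)]
    have : k + 1 + m = k + (m + 1) := by omega
    rw [this]

lemma prod_ppairs_eq (r : ℕ) (f : Fin r → Fin r → PolyQ 1) :
    (∏ i : Fin r, ∏ j ∈ Finset.Ioi i, f i j) = ∏ p ∈ PPairs r, f p.1 p.2 := by
  rw [Finset.prod_sigma' Finset.univ (fun i => Finset.Ioi i) f]
  refine Finset.prod_bij (fun x _ => ((x.1, x.2) : Fin r × Fin r)) ?_ ?_ ?_ ?_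
  · intro x hx
    simp only [Finset.mem_sigma, Finset.mem_univ, Finset.mem_Ioi, true_and] at hx
    exact Finset.mem_filter.mpr ⟨Finset.mem_univ _, hx⟩
  · rintro ⟨a1, a2⟩ _ ⟨b1, b2⟩ _ h
    simp only [Prod.mk.injEq] at h
    obtain ⟨h1, h2⟩ := h
    subst h1
    subst h2
    rfl
  · intro p hp
    exact ⟨⟨p.1, p.2⟩, by
      simp only [Finset.mem_sigma, Finset.mem_univ, Finset.mem_Ioi, true_and]
      exact (Finset.mem_filter.mp hp).2, rfl⟩
  · intro x _
    rfl

lemma wpol_eq_vandermonde (r : ℕ) :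
    Wpol r = (Matrix.vandermonde (fun i : Fin r => xv i)).det := by
  rw [Matrix.det_vandermonde, prod_ppairs_eq r (fun i j => xv j - xv i), Wpol]

lemma vpol_eq_vandermonde (r : ℕ) :
    (∏ p ∈ PPairs r, (xv p.1 - xv p.2))
      = (Matrix.vandermonde (fun i : Fin r => xv (i.rev))).det := by
  rw [Matrix.det_vandermonde, prod_ppairs_eq r (fun i j => xv (j.rev) - xv (i.rev))]
  refine Finset.prod_nbij' (fun p => (p.2.rev, p.1.rev)) (fun p => (p.2.rev, p.1.rev))
    ?_ ?_ ?_ ?_ ?_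
  · intro p hp
    exact Finset.mem_filter.mpr ⟨Finset.mem_univ _,
      Fin.rev_lt_rev.mpr (Finset.mem_filter.mp hp).2⟩
  · intro p hp
    exact Finset.mem_filter.mpr ⟨Finset.mem_univ _,
      Fin.rev_lt_rev.mpr (Finset.mem_filter.mp hp).2⟩
  · intro p _
    simp [Fin.rev_rev]
  · intro p _
    simp [Fin.rev_rev]
  · intro p _
    simp [Fin.rev_rev]

lemma vandermonde_rev_eq_submatrix (r : ℕ) :
    Matrix.vandermonde (fun i : Fin r => xv (i.rev))
      = (Matrix.vandermonde (fun i : Fin r => xv i)).submatrix (⇑(Fin.revPerm : Equiv.Perm (Fin r))) id := by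
  ext i j
  simp [Matrix.vandermonde, Matrix.submatrix_apply]

/-- the main bridging identity -/
lemma s_eq_Sq (r : ℕ) (q : ℕ → ℕ) (M' : Matrix (Fin r) (Fin r) (PolyQ 1))
    (hM' : M' = (Amat q r).submatrix id (⇑(Fin.revPerm : Equiv.Perm (Fin r))))
    (s : PolyQ 1)
    (hs : s * (∏ p ∈ PPairs r, (xv p.1 - xv p.2)) = M'.det) :
    s = Sq q r := by
  apply Sq_unique
  have hε := Matrix.det_permute' (Fin.revPerm : Equiv.Perm (Fin r)) (Amat q r)
  have hε2 := Matrix.det_permute (Fin.revPerm : Equiv.Perm (Fin r))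
    (Matrix.vandermonde (fun i : Fin r => xv i))
  set ε : PolyQ 1 := ((Equiv.Perm.sign (Fin.revPerm : Equiv.Perm (Fin r)) : ℤ) : PolyQ 1) with hεdef
  have hV : (∏ p ∈ PPairs r, (xv p.1 - xv p.2)) = ε * Wpol r := by
    rw [vpol_eq_vandermonde, vandermonde_rev_eq_submatrix, hε2, wpol_eq_vandermonde]
  have hdet : M'.det = ε * Adet q r := by
    rw [hM', hε]
    rfl
  have hεε : ε * ε = 1 := by
    rw [hεdef]
    rw [← Int.cast_mul, ← Units.val_mul, Int.units_mul_self]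
    norm_num
  rw [hV, hdet] at hs
  linear_combination ε * hs + (Adet q r - s * Wpol r) * hεε

/-- For a partition `λ₁ ≥ ⋯ ≥ λ_r ≥ 0` (here `lam : Fin r → ℕ`,
antitone, 0-indexed), the left-to-right product
`ψ_{λ_r} * ψ_{λ_{r−1}+1} * ⋯ * ψ_{λ₁+r−1}` in `ℋ(A₁)` equals the Schur polynomial
`s_λ(x₁,…,x_r)`, characterized by
`s_λ · ∏_{i<j} (x_i − x_j) = det (x_i^{λ_j + r − j})`. -/
theorem psi_product_eq_schur (r : ℕ) (lam : Fin r → ℕ) (hlam : Antitone lam) :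
    ∀ s : PolyQ 1,
      s * (∏ p ∈ Finset.univ.filter (fun p : Fin r × Fin r => p.1 < p.2),
            (X ((0 : Fin 1), (p.1 : ℕ)) - X ((0 : Fin 1), (p.2 : ℕ)))) =
          (Matrix.of fun i j : Fin r =>
            (X ((0 : Fin 1), (i : ℕ)) : PolyQ 1) ^ (lam j + (r - 1 - (j : ℕ)))).det →
      cohaProdFin A1 (fun _ => oneDim) (fun u => psi (lam u.rev + (u : ℕ))) = s := by
  intro s hs
  cases r with
  | zero =>
    have h1 : (∏ p ∈ Finset.univ.filter (fun p : Fin 0 × Fin 0 => p.1 < p.2),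
        (X ((0 : Fin 1), (p.1 : ℕ)) - X ((0 : Fin 1), (p.2 : ℕ))) : PolyQ 1) = 1 :=
      Finset.prod_of_isEmpty _
    rw [h1, mul_one, Matrix.det_fin_zero] at hs
    rw [cohaProdFin]
    rw [show (List.ofFn fun u : Fin 0 =>
        (((fun _ => oneDim) u : Fin 1 → ℕ), psi (lam u.rev + (u : ℕ)))) = [] from
      List.ofFn_zero]
    exact hs.symm
  | succ m =>
    set q : ℕ → ℕ := fun u => (if h : u < m + 1 then lam (Fin.rev ⟨u, h⟩) else 0) + u with hqdef
    have hq : ∀ u : Fin (m + 1), lam u.rev + (u : ℕ) = q (u : ℕ) := by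
      intro u
      show _ = (if h : (u : ℕ) < m + 1 then lam (Fin.rev ⟨(u : ℕ), h⟩) else 0) + (u : ℕ)
      rw [dif_pos u.isLt, Fin.eta]
    have hlist : (List.ofFn fun u : Fin (m + 1) =>
        (((fun _ => oneDim) u : Fin 1 → ℕ), psi (lam u.rev + (u : ℕ))))
        = ((oneDim, psi (q 0)) : (Fin 1 → ℕ) × PolyQ 1) ::
          List.ofFn (fun u : Fin m => ((oneDim, psi (q (1 + (u : ℕ)))) : (Fin 1 → ℕ) × PolyQ 1)) := by
      rw [List.ofFn_succ]
      congr 1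
      · refine congrArg List.ofFn (funext fun u => ?_)
        rw [hq u.succ]
        have : ((u.succ : Fin (m + 1)) : ℕ) = 1 + (u : ℕ) := by
          rw [Fin.val_succ]; omega
        rw [this]
    rw [cohaProdFin, hlist]
    show (List.foldl (fun acc y => (acc.1 + y.1, cohaMul A1 acc.1 y.1 acc.2 y.2))
      ((oneDim, psi (q 0)) : (Fin 1 → ℕ) × PolyQ 1)
      (List.ofFn fun u : Fin m => ((oneDim, psi (q (1 + (u : ℕ)))) : (Fin 1 → ℕ) × PolyQ 1))).2 = s
    have h0 : ((oneDim, psi (q 0)) : (Fin 1 → ℕ) × PolyQ 1) = ((fun _ => 1), Sq q 1) := by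
      rw [psi_eq_Sq_one q]
      rfl
    rw [h0, fold_lemma q m 1]
    show Sq q (1 + m) = s
    rw [Nat.add_comm 1 m]
    refine (s_eq_Sq (m + 1) q (Matrix.of fun i j : Fin (m + 1) =>
      (X ((0 : Fin 1), (i : ℕ)) : PolyQ 1) ^ (lam j + (m + 1 - 1 - (j : ℕ)))) ?_ s ?_).symm
    · -- matrix identification
      ext i j
      simp only [Matrix.of_apply, Matrix.submatrix_apply, id_eq, Amat]
      have hrev : ((Fin.revPerm : Equiv.Perm (Fin (m + 1))) j) = j.rev := rfl
      rw [hrev]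
      have hq' : q ((j.rev : ℕ)) = lam j + (m + 1 - 1 - (j : ℕ)) := by
        show (if h : (j.rev : ℕ) < m + 1 then lam (Fin.rev ⟨(j.rev : ℕ), h⟩) else 0)
            + (j.rev : ℕ) = _
        rw [dif_pos j.rev.isLt, Fin.eta, Fin.rev_rev]
        congr 1
        rw [Fin.val_rev]
        omega
      rw [hq']
      rfl
    · exact hs

end SchurCoha
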